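/- Let $m \geq 1$, let $u_1,\ldots,u_m$ be nonnegative reals and $N$ a positive real with $N \leq \sum_{i=1}^m u_i$. If $0 < \epsilon < (1/m)^{10^m}$, then there exists $\eta \in [\epsilon, \epsilon^{1/10^m}]$ such that for every $i \in [m]$, either $u_i < \eta N$ or $u_i \geq \eta^{1/10} N$. -/
import Mathlib


/-- Gap lemma: if `N ≤ ∑ uᵢ` and `ε < (1/m)^(10^m)`, there is a scale
`η ∈ [ε, ε^(1/10^m)]` such that every `uᵢ` is either below `ηN` or at least `η^(1/10) N`. -/
theorem stmt1 (m : ℕ) (hm : 1 ≤ m) (u : Fin m → ℝ) (hu : ∀ i, 0 ≤ u i)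
    (N : ℝ) (hN : 0 < N) (hNle : N ≤ ∑ i, u i)
    (ε : ℝ) (hε : 0 < ε) (hεm : ε < (1 / (m : ℝ)) ^ (10 ^ m)) :
    ∃ η : ℝ, ε ≤ η ∧ η ≤ ε ^ ((1 : ℝ) / 10 ^ m) ∧
      ∀ i, u i < η * N ∨ η ^ ((1 : ℝ) / 10) * N ≤ u i := by
  have hm0 : (0:ℝ) < m := by exact_mod_cast hm
  have hε1 : ε < 1 := lt_of_lt_of_le hεm (by
    apply pow_le_one₀ (by positivity)
    rw [div_le_one hm0]; exact_mod_cast hm)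
  set a : ℕ → ℝ := fun k => ε ^ ((1:ℝ)/10^k) with ha
  have ha_pos : ∀ k, 0 < a k := fun k => Real.rpow_pos_of_pos hε _
  have ha_mono : ∀ {k j : ℕ}, k ≤ j → a k ≤ a j := by
    intro k j hkj
    apply Real.rpow_le_rpow_of_exponent_ge hε hε1.le
    apply one_div_le_one_div_of_le (by positivity)
    exact pow_le_pow_right₀ (by norm_num) hkj
  have ha0 : a 0 = ε := by simp [ha]
  have ha_succ : ∀ k, (a k) ^ ((1:ℝ)/10) = a (k+1) := by
    intro k
    show (ε ^ ((1:ℝ)/10^k)) ^ ((1:ℝ)/10) = ε ^ ((1:ℝ)/10^(k+1))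
    rw [← Real.rpow_mul hε.le]
    congr 1
    rw [pow_succ]
    ring
  have ham : a m < 1/m := by
    have h := Real.rpow_lt_rpow hε.le hεm (by positivity : (0:ℝ) < 1/10^m)
    calc a m = ε ^ ((1:ℝ)/10^m) := rfl
      _ < ((1/(m:ℝ))^(10^m)) ^ ((1:ℝ)/10^m) := h
      _ = 1/m := by
          rw [← Real.rpow_natCast (1/(m:ℝ)) (10^m), ← Real.rpow_mul (by positivity)]
          push_cast
          rw [mul_one_div, div_self (by positivity), Real.rpow_one]
  haveI : Nonempty (Fin m) := ⟨⟨0, hm⟩⟩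
  obtain ⟨i0, hi0⟩ : ∃ i0, ∀ i, u i ≤ u i0 := Finite.exists_max u
  have hNmu : N / m ≤ u i0 := by
    rw [div_le_iff₀ hm0]
    calc N ≤ ∑ i, u i := hNle
      _ ≤ ∑ _i : Fin m, u i0 := Finset.sum_le_sum fun i _ => hi0 i
      _ = m * u i0 := by rw [Finset.sum_const, Finset.card_univ, Fintype.card_fin, nsmul_eq_mul]
      _ = u i0 * m := mul_comm _ _
  have hui0 : a m * N < u i0 := by
    calc a m * N < (1/m) * N := by
          exact mul_lt_mul_of_pos_right ham hN
      _ = N / m := by ring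
      _ ≤ u i0 := hNmu
  have claim : ∃ k, k < m ∧ ∀ i, u i < a k * N ∨ a (k+1) * N ≤ u i := by
    by_contra hcon
    push_neg at hcon
    have hw : ∀ k : Fin m, ∃ i, a k.val * N ≤ u i ∧ u i < a (k.val+1) * N := by
      intro k
      obtain ⟨i, hi⟩ := hcon k.val k.isLt
      exact ⟨i, hi.1, hi.2⟩
    choose c hc1 hc2 using hw
    have hlt : ∀ k j : Fin m, k < j → c k ≠ c j := by
      intro k j hkj heq
      have h1 : u (c k) < a (k.val+1) * N := hc2 k
      have h2 : a (j.val) * N ≤ u (c j) := hc1 j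
      rw [← heq] at h2
      have : a (k.val+1) ≤ a j.val := ha_mono hkj
      nlinarith [ha_pos (k.val+1)]
    have cinj : Function.Injective c := by
      intro k j heq
      by_contra hne
      rcases lt_or_gt_of_ne hne with h | h
      · exact hlt k j h heq
      · exact hlt j k h heq.symm
    have cne : ∀ k, c k ≠ i0 := by
      intro k heq
      have h1 : u (c k) < a (k.val+1) * N := hc2 k
      have h2 : a (k.val+1) ≤ a m := ha_mono k.isLt
      have : u (c k) < u i0 := by nlinarith
      rw [heq] at this
      exact lt_irrefl _ this
    obtain ⟨k, hk⟩ := (Finite.injective_iff_surjective.mp cinj) i0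
    exact cne k hk
  obtain ⟨k, hk, hgap⟩ := claim
  refine ⟨a k, ?_, ?_, ?_⟩
  · rw [← ha0]; exact ha_mono (Nat.zero_le k)
  · exact ha_mono hk.le
  · intro i
    rcases hgap i with h | h
    · exact Or.inl h
    · right; rw [ha_succ k]; exact h
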